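/- arXiv:2111.03103 — 4 statements merged into one kernel-verified Lean document; each statement's English description precedes it below -/
import Mathlib

section
/- Let A be a Hermitian matrix and B a Hermitian matrix with ‖B‖ ≤ α_B and ‖[A,B]‖ ≤ α_{AB}. Then for any real s with |s| ≤ h, ‖[B, e^{iAs} B e^{-iAs}]‖ ≤ 2 α_B α_{AB} h. -/
open scoped Matrix.Norms.L2Operator
open NormedSpace Complex

set_option maxHeartbeats 1000000

/-- For Hermitian `A`, Hermitian `B` with `‖B‖ ≤ α_B` and `‖[A,B]‖ ≤ α_{AB}`, and `|s| ≤ h`,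
`‖[B, e^{iAs} B e^{-iAs}]‖ ≤ 2 α_B α_AB h`. -/
theorem stmt7 (n : ℕ) (A B : Matrix (Fin n) (Fin n) ℂ)
    (hA : A.IsHermitian) (hB : B.IsHermitian)
    (αB αAB : ℝ) (hBn : ‖B‖ ≤ αB) (hABn : ‖A * B - B * A‖ ≤ αAB)
    (s h : ℝ) (hs : |s| ≤ h) :
    ‖B * (exp ((I * (s : ℂ)) • A) * B * exp ((-(I : ℂ) * (s : ℂ)) • A)) -
      (exp ((I * (s : ℂ)) • A) * B * exp ((-(I : ℂ) * (s : ℂ)) • A)) * B‖ ≤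
      2 * αB * αAB * h := by
  rcases Nat.eq_zero_or_pos n with hn | hn
  · subst hn
    have h0 : (B * (exp ((I * (s : ℂ)) • A) * B * exp ((-(I : ℂ) * (s : ℂ)) • A)) -
      (exp ((I * (s : ℂ)) • A) * B * exp ((-(I : ℂ) * (s : ℂ)) • A)) * B) = 0 :=
      Subsingleton.elim _ _
    rw [h0, norm_zero]
    have hαB : (0:ℝ) ≤ αB := le_trans (norm_nonneg _) hBn
    have hαAB : (0:ℝ) ≤ αAB := le_trans (norm_nonneg _) hABn
    have hh : (0:ℝ) ≤ h := le_trans (abs_nonneg _) hs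
    positivity
  haveI : NeZero n := ⟨hn.ne'⟩
  set M : Matrix (Fin n) (Fin n) ℂ := I • A with hM
  -- star M = -M
  have hstarM : star M = -M := by
    simp [hM, star_smul, Complex.conj_I, Matrix.star_eq_conjTranspose, hA.eq, neg_smul]
  -- each exp (t • M) with real t is unitary
  have hunit : ∀ r : ℝ, exp ((r : ℂ) • M) ∈ unitary (Matrix (Fin n) (Fin n) ℂ) := by
    intro r
    letI : NormedAlgebra ℚ (Matrix (Fin n) (Fin n) ℂ) := NormedAlgebra.restrictScalars ℚ ℂ _
    apply exp_mem_unitary_of_mem_skewAdjoint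
    rw [skewAdjoint.mem_iff, star_smul, hstarM]
    simp
  have hnorm1 : ∀ r : ℝ, ‖exp ((r : ℂ) • M)‖ = 1 := fun r =>
    CStarRing.norm_coe_unitary ⟨_, hunit r⟩
  have hnorm1' : ∀ r : ℝ, ‖exp ((r : ℂ) • (-M))‖ = 1 := by
    intro r
    have : (r : ℂ) • (-M) = ((-r : ℝ) : ℂ) • M := by push_cast; rw [neg_smul, smul_neg]
    rw [this]; exact hnorm1 (-r)
  -- F
  set F : ℝ → Matrix (Fin n) (Fin n) ℂ :=
    fun r => exp ((r : ℂ) • M) * B * exp ((r : ℂ) • (-M)) with hF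
  have hαB : (0:ℝ) ≤ αB := le_trans (norm_nonneg _) hBn
  have hαAB : (0:ℝ) ≤ αAB := le_trans (norm_nonneg _) hABn
  have hh : (0:ℝ) ≤ h := le_trans (abs_nonneg _) hs
  -- derivative of F
  have hderiv : ∀ r : ℝ, HasDerivAt F
      (exp ((r : ℂ) • M) * (M * B - B * M) * exp ((r : ℂ) • (-M))) r := by
    intro r
    have d1 : HasDerivAt (fun t : ℂ => exp (t • M)) (M * exp ((r:ℂ) • M)) (r:ℂ) :=
      hasDerivAt_exp_smul_const' M (r:ℂ)
    have d2 : HasDerivAt (fun t : ℂ => exp (t • (-M)))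
        (exp ((r:ℂ) • (-M)) * (-M)) (r:ℂ) :=
      hasDerivAt_exp_smul_const (-M) (r:ℂ)
    have dc : HasDerivAt (fun t : ℂ => exp (t • M) * B * exp (t • (-M)))
        ((M * exp ((r:ℂ) • M) * B) * exp ((r:ℂ) • (-M)) +
          (exp ((r:ℂ) • M) * B) * (exp ((r:ℂ) • (-M)) * (-M))) (r:ℂ) := by
      exact ((d1.mul_const B).mul d2)
    have key := HasDerivAt.scomp (𝕜 := ℝ) r dc Complex.ofRealCLM.hasDerivAt
    simp only [Complex.ofRealCLM_apply, Complex.ofReal_one, one_smul, Function.comp_def] at key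
    refine key.congr_deriv ?_
    have hcomm : Commute (exp ((r:ℂ) • (-M))) (-M) :=
      (((Commute.refl (-M)).smul_left ((r:ℂ)))).exp_left
    have hcomm2 : Commute (exp ((r:ℂ) • M)) M :=
      (((Commute.refl M).smul_left ((r:ℂ)))).exp_left
    rw [hcomm.eq, ← hcomm2.eq]
    noncomm_ring
  -- norm of derivative
  have hdnorm : ∀ r : ℝ,
      ‖exp ((r : ℂ) • M) * (M * B - B * M) * exp ((r : ℂ) • (-M))‖ ≤ αAB := by
    intro r
    have h1 : M * B - B * M = I • (A * B - B * A) := by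
      rw [hM, smul_sub, smul_mul_assoc, mul_smul_comm]
    have h2 : ‖M * B - B * M‖ ≤ αAB := by
      rw [h1, norm_smul, Complex.norm_I, one_mul]
      exact hABn
    calc ‖exp ((r : ℂ) • M) * (M * B - B * M) * exp ((r : ℂ) • (-M))‖
        ≤ ‖exp ((r : ℂ) • M) * (M * B - B * M)‖ * ‖exp ((r : ℂ) • (-M))‖ :=
          norm_mul_le _ _
      _ ≤ ‖exp ((r : ℂ) • M)‖ * ‖M * B - B * M‖ * ‖exp ((r : ℂ) • (-M))‖ :=
          mul_le_mul_of_nonneg_right (norm_mul_le _ _) (norm_nonneg _)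
      _ = ‖M * B - B * M‖ := by rw [hnorm1, hnorm1']; ring
      _ ≤ αAB := h2
  -- mean value inequality
  have hmv : ‖F s - F 0‖ ≤ αAB * ‖s - 0‖ := by
    apply Convex.norm_image_sub_le_of_norm_hasDerivWithin_le
      (f := F) (C := αAB)
      (fun r _ => (hderiv r).hasDerivWithinAt) (fun r _ => hdnorm r)
      convex_univ (Set.mem_univ 0) (Set.mem_univ s)
  have hF0 : F 0 = B := by
    simp [hF, NormedSpace.exp_zero]
  have e1 : (I * (s : ℂ)) • A = ((s : ℂ)) • M := by
    rw [hM, smul_smul]; congr 1; ring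
  have e2 : (-(I : ℂ) * (s : ℂ)) • A = ((s : ℂ)) • (-M) := by
    rw [hM, smul_neg, ← neg_smul, smul_smul]; congr 1; ring
  have hFs : exp ((I * (s : ℂ)) • A) * B * exp ((-(I : ℂ) * (s : ℂ)) • A) = F s := by
    rw [hF, e1, e2]
  have hdiff : ‖F s - B‖ ≤ αAB * h := by
    rw [← hF0]
    refine le_trans hmv ?_
    rw [sub_zero, Real.norm_eq_abs]
    exact mul_le_mul_of_nonneg_left hs hαAB
  rw [hFs]
  have key : B * F s - F s * B = B * (F s - B) - (F s - B) * B := by noncomm_ring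
  rw [key]
  calc ‖B * (F s - B) - (F s - B) * B‖
      ≤ ‖B * (F s - B)‖ + ‖(F s - B) * B‖ := norm_sub_le _ _
    _ ≤ ‖B‖ * ‖F s - B‖ + ‖F s - B‖ * ‖B‖ := by
        gcongr <;> exact norm_mul_le _ _
    _ ≤ αB * (αAB * h) + (αAB * h) * αB := by gcongr
    _ = 2 * αB * αAB * h := by ring
end

section
/- Let A be Hermitian and B : ℝ → ℂ^{n×n} be continuously differentiable Hermitian-valued with ‖B(t)‖ ≤ α_B, ‖B'(t)‖ ≤ β_B, ‖[A,B(t)]‖ ≤ α_{AB} for all t. Then for all s,t with |s-t| ≤ h, ‖[B(t), e^{iA(s-t)} B(s) e^{-iA(s-t)}]‖ ≤ min( 2α_B², 2α_B(α_{AB}+β_B)h ). -/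
open scoped Matrix.Norms.L2Operator
open NormedSpace Complex

/-- Bounds for commutators in the interaction picture: for `|s-t| ≤ h`,
`‖[B(t), e^{iA(s-t)} B(s) e^{-iA(s-t)}]‖ ≤ min(2α_B², 2α_B(α_{AB}+β_B)h)`. -/
theorem stmt8 (n : ℕ) (A : Matrix (Fin n) (Fin n) ℂ) (hA : A.IsHermitian)
    (B B' : ℝ → Matrix (Fin n) (Fin n) ℂ)
    (hB' : ∀ t, HasDerivAt B (B' t) t) (hB'cont : Continuous B')
    (hBherm : ∀ t, (B t).IsHermitian)
    (αB βB αAB : ℝ)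
    (hBn : ∀ t, ‖B t‖ ≤ αB) (hB'n : ∀ t, ‖B' t‖ ≤ βB)
    (hABn : ∀ t, ‖A * B t - B t * A‖ ≤ αAB)
    (s t h : ℝ) (hst : |s - t| ≤ h) :
    ‖B t * (exp ((I * ((s - t : ℝ) : ℂ)) • A) * B s * exp ((-(I : ℂ) * ((s - t : ℝ) : ℂ)) • A)) -
      (exp ((I * ((s - t : ℝ) : ℂ)) • A) * B s * exp ((-(I : ℂ) * ((s - t : ℝ) : ℂ)) • A)) * B t‖ ≤
      min (2 * αB ^ 2) (2 * αB * (αAB + βB) * h) := by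
  set M : Matrix (Fin n) (Fin n) ℂ := (I : ℂ) • A with hM
  -- basic nonnegativity
  have hαB : 0 ≤ αB := le_trans (norm_nonneg _) (hBn 0)
  have hβB : 0 ≤ βB := le_trans (norm_nonneg _) (hB'n 0)
  have hαAB : 0 ≤ αAB := le_trans (norm_nonneg _) (hABn 0)
  have hh : 0 ≤ h := le_trans (abs_nonneg _) hst
  -- rewriting the exponents as real smul
  have hsm : ∀ u : ℝ, (I * (u : ℂ)) • A = u • M := by
    intro u
    ext i j
    simp [Matrix.smul_apply, Complex.real_smul, hM]
    ring
  have hsm' : ∀ u : ℝ, (-(I : ℂ) * (u : ℂ)) • A = u • (-M) := by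
    intro u
    ext i j
    simp [Matrix.smul_apply, Complex.real_smul, hM]
    ring
  -- the conjugating family
  set E : ℝ → Matrix (Fin n) (Fin n) ℂ := fun u => exp ((u - t) • M) with hE
  set F : ℝ → Matrix (Fin n) (Fin n) ℂ := fun u => exp ((u - t) • (-M)) with hF
  -- unitarity
  have hMskew : M ∈ skewAdjoint (Matrix (Fin n) (Fin n) ℂ) :=
    (hA.isSelfAdjoint).smul_mem_skewAdjoint conj_I
  have hEu : ∀ u : ℝ, E u ∈ unitary (Matrix (Fin n) (Fin n) ℂ) := fun u => by
    let +nondep : NormedAlgebra ℚ (Matrix (Fin n) (Fin n) ℂ) := .restrictScalars ℚ ℂ _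
    exact exp_mem_unitary_of_mem_skewAdjoint
      (skewAdjoint.smul_mem (u - t) hMskew)
  have hFu : ∀ u : ℝ, F u ∈ unitary (Matrix (Fin n) (Fin n) ℂ) := fun u => by
    let +nondep : NormedAlgebra ℚ (Matrix (Fin n) (Fin n) ℂ) := .restrictScalars ℚ ℂ _
    exact exp_mem_unitary_of_mem_skewAdjoint
      (skewAdjoint.smul_mem (u - t)
        ((skewAdjoint (Matrix (Fin n) (Fin n) ℂ)).neg_mem hMskew))
  have hnormEBF : ∀ (u : ℝ) (X : Matrix (Fin n) (Fin n) ℂ), ‖E u * X * F u‖ = ‖X‖ := by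
    intro u X
    rw [CStarRing.norm_mul_mem_unitary _ (hFu u), CStarRing.norm_mem_unitary_mul X (hEu u)]
  -- derivatives
  have hEd : ∀ u : ℝ, HasDerivAt E (E u * M) u := by
    intro u
    have h1 : HasDerivAt (fun v : ℝ => exp (v • M)) (exp ((u - t) • M) * M) (u - t) := by
      have := hasDerivAt_exp_smul_const (𝕂 := ℝ) M (u - t)
      exact this
    have h2 : HasDerivAt (fun v : ℝ => v - t) 1 u := (hasDerivAt_id u).sub_const t
    have h3 := h1.scomp u h2
    simpa only [one_smul, Function.comp_def] using h3
  have hFd : ∀ u : ℝ, HasDerivAt F (F u * (-M)) u := by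
    intro u
    have h1 : HasDerivAt (fun v : ℝ => exp (v • (-M))) (exp ((u - t) • (-M)) * (-M)) (u - t) := by
      have := hasDerivAt_exp_smul_const (𝕂 := ℝ) (-M) (u - t)
      exact this
    have h2 : HasDerivAt (fun v : ℝ => v - t) 1 u := (hasDerivAt_id u).sub_const t
    have h3 := h1.scomp u h2
    simpa only [one_smul, Function.comp_def] using h3
  have hcomm : ∀ u : ℝ, F u * M = M * F u := by
    intro u
    exact (((Commute.refl M).neg_right.smul_right (u - t)).exp_right).symm.eq
  -- the interaction-picture function and its derivative
  set f : ℝ → Matrix (Fin n) (Fin n) ℂ := fun u => E u * B u * F u with hf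
  have hfd : ∀ u : ℝ, HasDerivAt f (E u * (M * B u - B u * M + B' u) * F u) u := by
    intro u
    have := ((hEd u).mul (hB' u)).mul (hFd u)
    refine this.congr_deriv ?_
    simp only [Pi.mul_apply]
    rw [show F u * -M = -M * F u from by rw [mul_neg, hcomm u, neg_mul]]
    noncomm_ring
  -- bound on the derivative
  have hfd_bound : ∀ u : ℝ, ‖E u * (M * B u - B u * M + B' u) * F u‖ ≤ αAB + βB := by
    intro u
    rw [hnormEBF]
    have h1 : M * B u - B u * M = (I : ℂ) • (A * B u - B u * A) := by
      rw [hM]; rw [smul_sub, Matrix.smul_mul, Matrix.mul_smul]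
    calc ‖M * B u - B u * M + B' u‖ ≤ ‖M * B u - B u * M‖ + ‖B' u‖ := norm_add_le _ _
      _ ≤ αAB + βB := by
          apply add_le_add _ (hB'n u)
          rw [h1, norm_smul, Complex.norm_I, one_mul]
          exact hABn u
  -- f t = B t
  have hft : f t = B t := by
    simp [hf, hE, hF, sub_self, NormedSpace.exp_zero]
  -- mean value theorem
  have hmvt : ‖f s - f t‖ ≤ (αAB + βB) * h := by
    have := Convex.norm_image_sub_le_of_norm_hasDerivWithin_le
      (f := f) (f' := fun u => E u * (M * B u - B u * M + B' u) * F u)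
      (s := (Set.univ : Set ℝ))
      (fun x _ => (hfd x).hasDerivWithinAt) (fun x _ => hfd_bound x)
      convex_univ (Set.mem_univ t) (Set.mem_univ s)
    calc ‖f s - f t‖ ≤ (αAB + βB) * ‖s - t‖ := this
      _ ≤ (αAB + βB) * h := by
          have habs : ‖s - t‖ ≤ h := by rwa [Real.norm_eq_abs]
          exact mul_le_mul_of_nonneg_left habs (by linarith)
  -- identify the statement's expression with f s
  have hXs : exp ((I * ((s - t : ℝ) : ℂ)) • A) * B s *
      exp ((-(I : ℂ) * ((s - t : ℝ) : ℂ)) • A) = f s := by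
    rw [hsm (s - t), hsm' (s - t)]
  rw [hXs]
  have hfs_norm : ‖f s‖ ≤ αB := by
    rw [hf]
    calc ‖E s * B s * F s‖ = ‖B s‖ := hnormEBF s (B s)
      _ ≤ αB := hBn s
  apply le_min
  · -- first bound
    calc ‖B t * f s - f s * B t‖ ≤ ‖B t * f s‖ + ‖f s * B t‖ := norm_sub_le _ _
      _ ≤ ‖B t‖ * ‖f s‖ + ‖f s‖ * ‖B t‖ := add_le_add (norm_mul_le _ _) (norm_mul_le _ _)
      _ ≤ αB * αB + αB * αB := by
          have h1 := hBn t
          have h2 := hfs_norm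
          have h3 := norm_nonneg (B t)
          have h4 := norm_nonneg (f s)
          nlinarith
      _ = 2 * αB ^ 2 := by ring
  · -- second bound
    have key : B t * f s - f s * B t = B t * (f s - B t) - (f s - B t) * B t := by
      noncomm_ring
    calc ‖B t * f s - f s * B t‖ = ‖B t * (f s - B t) - (f s - B t) * B t‖ := by rw [key]
      _ ≤ ‖B t * (f s - B t)‖ + ‖(f s - B t) * B t‖ := norm_sub_le _ _
      _ ≤ ‖B t‖ * ‖f s - B t‖ + ‖f s - B t‖ * ‖B t‖ := add_le_add (norm_mul_le _ _) (norm_mul_le _ _)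
      _ ≤ αB * ((αAB + βB) * h) + ((αAB + βB) * h) * αB := by
          have h1 := hBn t
          have h2 : ‖f s - B t‖ ≤ (αAB + βB) * h := by rw [← hft]; exact hmvt
          have h3 := norm_nonneg (B t)
          have h4 := norm_nonneg (f s - B t)
          nlinarith
      _ = 2 * αB * (αAB + βB) * h := by ring
end

section
/- Let H : [0,T] → ℂ^{n×n} be a continuous family of Hermitian matrices, and define Ũ₁(t) = exp(-i ∫_0^t H(s)ds). Then Ũ₁ is differentiable and satisfies i ∂_t Ũ₁(t) = ( ∫_0^1 e^{-iβ∫_0^t H(s)ds} H(t) e^{iβ∫_0^t H(s)ds} dβ ) Ũ₁(t). -/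
open scoped Matrix.Norms.L2Operator
open NormedSpace Complex intervalIntegral

private lemma aux_hasDerivAt_expC {n : ℕ} (A : Matrix (Fin n) (Fin n) ℂ) (s : ℝ) :
    HasDerivAt (fun u : ℝ => exp (u • A)) (exp (s • A) * A) s := by
  simpa using hasDerivAt_exp_smul_const (𝕂 := ℝ) A s

/-- Duhamel's formula for the difference of two matrix exponentials. -/
private lemma aux_duhamel {n : ℕ} (A B : Matrix (Fin n) (Fin n) ℂ) :
    exp A - exp B
      = ∫ s in (0:ℝ)..1, exp (s • A) * (A - B) * exp ((1 - s) • B) := by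
  letI : NormedAlgebra ℚ (Matrix (Fin n) (Fin n) ℂ) := NormedAlgebra.restrictScalars ℚ ℂ _
  have hexp : Continuous (exp : Matrix (Fin n) (Fin n) ℂ → _) := exp_continuous
  have key : ∀ s : ℝ, HasDerivAt (fun u : ℝ => exp (u • A) * exp ((1 - u) • B))
      (exp (s • A) * (A - B) * exp ((1 - s) • B)) s := by
    intro s
    have h1 : HasDerivAt (fun u : ℝ => exp (u • A)) (exp (s • A) * A) s :=
      aux_hasDerivAt_expC A s
    have hin : HasDerivAt (fun u : ℝ => 1 - u) (-1 : ℝ) s := by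
      simpa using (hasDerivAt_id s).const_sub 1
    have h2' : HasDerivAt (fun u : ℝ => exp (u • B)) (B * exp ((1 - s) • B)) (1 - s) := by
      simpa using hasDerivAt_exp_smul_const' (𝕂 := ℝ) B (1 - s)
    have h2 : HasDerivAt (fun u : ℝ => exp ((1 - u) • B))
        ((-1 : ℝ) • (B * exp ((1 - s) • B))) s := h2'.scomp s hin
    have : HasDerivAt (fun u : ℝ => exp (u • A) * exp ((1 - u) • B)) _ s := h1.mul h2
    convert this using 1
    simp only [neg_one_smul, mul_neg]
    noncomm_ring
  have hcont : Continuous (fun s : ℝ => exp (s • A) * (A - B) * exp ((1 - s) • B)) := by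
    exact ((hexp.comp ((continuous_id).smul continuous_const)).mul continuous_const).mul
      (hexp.comp (((continuous_const.sub continuous_id)).smul continuous_const))
  have h := intervalIntegral.integral_eq_sub_of_hasDerivAt
      (fun s _ => key s) (hcont.intervalIntegrable 0 1)
  rw [h]
  simp [NormedSpace.exp_zero]

/-- Identification of the derivative with the stated expression. -/
private lemma aux_identify {n : ℕ} (A Kt Ht : Matrix (Fin n) (Fin n) ℂ)
    (hA : A = (-(I:ℂ)) • Kt) :
    (∫ s in (0:ℝ)..1, exp (s • A) * ((-(I:ℂ)) • Ht) * exp ((1 - s) • A))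
      = ((-(I : ℂ)) •
        ((∫ β in (0 : ℝ)..1,
            exp ((-(I : ℂ) * (β : ℂ)) • Kt) * Ht *
              exp ((I * (β : ℂ)) • Kt)) *
          exp ((-(I : ℂ)) • Kt))) := by
  letI : NormedAlgebra ℚ (Matrix (Fin n) (Fin n) ℂ) := NormedAlgebra.restrictScalars ℚ ℂ _
  have hexp : Continuous (exp : Matrix (Fin n) (Fin n) ℂ → _) := exp_continuous
  have e1 : ∀ β : ℝ, (-(I:ℂ) * (β:ℂ)) • Kt = β • A := by
    intro β
    rw [hA, ← Complex.coe_smul, smul_smul, mul_comm]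
  have e2 : ∀ β : ℝ, ((I:ℂ) * (β:ℂ)) • Kt = (-β) • A := by
    intro β
    rw [hA, ← Complex.coe_smul, smul_smul]
    congr 1
    push_cast
    ring
  have e3 : ∀ s : ℝ, exp ((1 - s) • A) = exp ((-s) • A) * exp A := by
    intro s
    rw [← exp_add_of_commute (((Commute.refl A).smul_left (-s)) : Commute ((-s) • A) A)]
    congr 1
    rw [sub_smul, one_smul, neg_smul]
    abel
  have step1 : (∫ s in (0:ℝ)..1, exp (s • A) * ((-(I:ℂ)) • Ht) * exp ((1 - s) • A))
      = (-(I:ℂ)) • ∫ s in (0:ℝ)..1, (exp (s • A) * Ht * exp ((-s) • A)) * exp A := by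
    rw [← intervalIntegral.integral_smul]
    refine intervalIntegral.integral_congr fun s _ => ?_
    rw [e3 s]
    rw [mul_smul_comm, smul_mul_assoc]
    ring_nf
    noncomm_ring
  rw [step1]
  congr 1
  have hint : IntervalIntegrable (fun s : ℝ => exp (s • A) * Ht * exp ((-s) • A))
      MeasureTheory.volume 0 1 := by
    apply Continuous.intervalIntegrable
    exact ((hexp.comp (continuous_id.smul continuous_const)).mul continuous_const).mul
      (hexp.comp ((continuous_id.neg).smul continuous_const))
  have := ContinuousLinearMap.intervalIntegral_comp_comm
    ((ContinuousLinearMap.mul ℂ (Matrix (Fin n) (Fin n) ℂ)).flip (exp A)) hint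
  simp only [ContinuousLinearMap.flip_apply, ContinuousLinearMap.mul_apply'] at this
  rw [this]
  congr 1
  · refine intervalIntegral.integral_congr fun β _ => ?_
    rw [e1 β, e2 β]
  · rw [hA]

/-- `Ũ₁(t) = exp(-i∫_0^t H)` is differentiable on `[0,T]` with
`i ∂_t Ũ₁(t) = (∫_0^1 e^{-iβK(t)} H(t) e^{iβK(t)} dβ) Ũ₁(t)`, where `K(t) = ∫_0^t H`. -/
theorem stmt12 (n : ℕ) (T : ℝ) (H : ℝ → Matrix (Fin n) (Fin n) ℂ)
    (hHcont : ContinuousOn H (Set.Icc 0 T))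
    (hHherm : ∀ t ∈ Set.Icc (0 : ℝ) T, (H t).IsHermitian)
    (t : ℝ) (ht : t ∈ Set.Icc (0 : ℝ) T) :
    HasDerivWithinAt (fun τ => exp ((-(I : ℂ)) • ∫ s in (0 : ℝ)..τ, H s))
      ((-(I : ℂ)) •
        ((∫ β in (0 : ℝ)..1,
            exp ((-(I : ℂ) * (β : ℂ)) • ∫ s in (0 : ℝ)..t, H s) * H t *
              exp ((I * (β : ℂ)) • ∫ s in (0 : ℝ)..t, H s)) *
          exp ((-(I : ℂ)) • ∫ s in (0 : ℝ)..t, H s)))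
      (Set.Icc 0 T) t := by
  haveI : Fact (t ∈ Set.Icc (0:ℝ) T) := ⟨ht⟩
  letI : NormedAlgebra ℚ (Matrix (Fin n) (Fin n) ℂ) := NormedAlgebra.restrictScalars ℚ ℂ _
  have hexp : Continuous (exp : Matrix (Fin n) (Fin n) ℂ → _) := exp_continuous
  set K : ℝ → Matrix (Fin n) (Fin n) ℂ := fun τ => ∫ s in (0:ℝ)..τ, H s with hKdef
  have hsub : Set.uIcc (0:ℝ) t ⊆ Set.Icc 0 T := by
    rw [Set.uIcc_of_le ht.1]
    exact Set.Icc_subset_Icc le_rfl ht.2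
  have hInt : IntervalIntegrable H MeasureTheory.volume 0 t :=
    (hHcont.mono hsub).intervalIntegrable
  have hmeas : StronglyMeasurableAtFilter H (nhdsWithin t (Set.Icc 0 T)) MeasureTheory.volume :=
    ⟨Set.Icc 0 T, self_mem_nhdsWithin, hHcont.aestronglyMeasurable measurableSet_Icc⟩
  have hK : HasDerivWithinAt K (H t) (Set.Icc 0 T) t :=
    intervalIntegral.integral_hasDerivWithinAt_right hInt hmeas
      (hHcont.continuousWithinAt ht)
  set Ω : ℝ → Matrix (Fin n) (Fin n) ℂ := fun τ => (-(I:ℂ)) • K τ with hΩdef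
  set A : Matrix (Fin n) (Fin n) ℂ := Ω t with hAdef
  set N : Matrix (Fin n) (Fin n) ℂ := (-(I:ℂ)) • H t with hNdef
  have hΩ : HasDerivWithinAt Ω N (Set.Icc 0 T) t := hK.const_smul (-(I:ℂ))
  -- the parametric integral map and its continuity
  set G : Matrix (Fin n) (Fin n) ℂ × Matrix (Fin n) (Fin n) ℂ → Matrix (Fin n) (Fin n) ℂ :=
    fun p => ∫ s in (0:ℝ)..1, exp (s • p.1) * p.2 * exp ((1 - s) • A) with hGdef
  have hGcont : Continuous G := by
    apply intervalIntegral.continuous_parametric_intervalIntegral_of_continuous'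
    · exact ((hexp.comp (continuous_snd.smul (continuous_fst.comp continuous_fst))).mul
        (continuous_snd.comp continuous_fst)).mul
        (hexp.comp ((continuous_const.sub continuous_snd).smul continuous_const))
  -- the limit of slopes
  have hΩtend : Filter.Tendsto Ω (nhdsWithin t (Set.Icc 0 T \ {t})) (nhds A) :=
    hΩ.continuousWithinAt.mono_left (nhdsWithin_mono t Set.diff_subset)
  have hslope : Filter.Tendsto (slope Ω t) (nhdsWithin t (Set.Icc 0 T \ {t})) (nhds N) :=
    hasDerivWithinAt_iff_tendsto_slope.mp hΩ
  have htend : Filter.Tendsto (fun τ => G (Ω τ, slope Ω t τ))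
      (nhdsWithin t (Set.Icc 0 T \ {t})) (nhds (G (A, N))) :=
    (hGcont.tendsto _).comp (hΩtend.prodMk_nhds hslope)
  -- identification of slopes via Duhamel's formula
  have heq : ∀ τ : ℝ, τ ≠ t →
      slope (fun τ => exp (Ω τ)) t τ = G (Ω τ, slope Ω t τ) := by
    intro τ hτ
    have hd := aux_duhamel (Ω τ) (Ω t)
    rw [slope_def_module, hd, ← intervalIntegral.integral_smul]
    refine intervalIntegral.integral_congr fun s _ => ?_
    rw [slope_def_module]
    rw [mul_smul_comm, smul_mul_assoc]
  have hmain : HasDerivWithinAt (fun τ => exp (Ω τ)) (G (A, N)) (Set.Icc 0 T) t := by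
    rw [hasDerivWithinAt_iff_tendsto_slope]
    refine htend.congr' ?_
    filter_upwards [self_mem_nhdsWithin] with τ hτ
    exact (heq τ hτ.2).symm
  -- identify the derivative with the stated expression
  have hDeq : G (A, N)
      = ((-(I : ℂ)) •
        ((∫ β in (0 : ℝ)..1,
            exp ((-(I : ℂ) * (β : ℂ)) • K t) * H t *
              exp ((I * (β : ℂ)) • K t)) *
          exp ((-(I : ℂ)) • K t))) := aux_identify A (K t) (H t) rfl
  exact hDeq ▸ hmain
end

section
/- Let A, B be Hermitian matrices and h > 0. Then for any positive integer L with Lh = T, the product e^{-iAh/2} e^{-iBh} e^{-iAh} e^{-iBh} ⋯ e^{-iAh} e^{-iBh} e^{-iAh/2} (with L factors of e^{-iBh}) equals e^{-iALh} · e^{-iH_I(Lh − h/2)h} ⋯ e^{-iH_I(h/2)h}, where H_I(t) = e^{iAt} B e^{-iAt}. In other words, applying the midpoint quadrature rule to qHOP in the interaction picture recovers the second-order Trotter formula. -/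
open scoped Matrix.Norms.L2Operator
open NormedSpace Complex

section Aux

variable {n : ℕ}

local notation "M" => Matrix (Fin n) (Fin n) ℂ

noncomputable instance instMatNormedAlgebraRat : NormedAlgebra ℚ M :=
  NormedAlgebra.restrictScalars ℚ ℂ _

lemma expA_mul (A : M) (a b : ℂ) :
    NormedSpace.exp (a • A) * NormedSpace.exp (b • A) = NormedSpace.exp ((a + b) • A) := by
  rw [add_smul, exp_add_of_commute (((Commute.refl A).smul_left a).smul_right b)]

lemma expA_mul' (A : M) (a b : ℂ) (Y : M) :
    NormedSpace.exp (a • A) * (NormedSpace.exp (b • A) * Y) = NormedSpace.exp ((a + b) • A) * Y := by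
  rw [← mul_assoc, expA_mul]

/-- The unit `e^{tA}` with inverse `e^{-tA}`. -/
noncomputable def expUnit (A : M) (t : ℂ) : (Matrix (Fin n) (Fin n) ℂ)ˣ where
  val := NormedSpace.exp (t • A)
  inv := NormedSpace.exp ((-t) • A)
  val_inv := by rw [expA_mul, add_neg_cancel, zero_smul, NormedSpace.exp_zero]
  inv_val := by rw [expA_mul, neg_add_cancel, zero_smul, NormedSpace.exp_zero]

lemma exp_conj_lemma (A B : M) (t c : ℂ) :
    NormedSpace.exp (c • (NormedSpace.exp (t • A) * B * NormedSpace.exp ((-t) • A)))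
      = NormedSpace.exp (t • A) * NormedSpace.exp (c • B) * NormedSpace.exp ((-t) • A) := by
  have h1 : NormedSpace.exp (t • A) * B * NormedSpace.exp ((-t) • A)
      = (expUnit A t : M) * B * ((expUnit A t)⁻¹ : (Matrix (Fin n) (Fin n) ℂ)ˣ) := rfl
  have h2 : c • ((expUnit A t : M) * B * ((expUnit A t)⁻¹ : (Matrix (Fin n) (Fin n) ℂ)ˣ))
      = (expUnit A t : M) * (c • B) * ((expUnit A t)⁻¹ : (Matrix (Fin n) (Fin n) ℂ)ˣ) := by
    rw [← smul_mul_assoc, ← mul_smul_comm]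
  rw [h1, h2, exp_units_conj]
  rfl

lemma key_ind (A X : M) (h : ℂ) (L : ℕ) :
    (List.ofFn fun j : Fin (L + 1) =>
        NormedSpace.exp ((I * ((j.val : ℂ) * h + h / 2)) • A) * X *
          NormedSpace.exp ((-(I * ((j.val : ℂ) * h + h / 2))) • A)).reverse.prod
      = NormedSpace.exp ((I * (((L : ℂ) + 1) * h)) • A) *
          (NormedSpace.exp ((-(I * (h / 2))) • A) *
            (X * NormedSpace.exp ((-(I * h)) • A)) ^ L * X *
            NormedSpace.exp ((-(I * (h / 2))) • A)) := by
  induction L with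
  | zero =>
      simp only [List.ofFn_succ, List.ofFn_zero, pow_zero, one_mul,
        List.reverse_cons, List.reverse_nil, List.nil_append, List.prod_cons,
        List.prod_nil, mul_one, Fin.coe_cast, Fin.val_zero, Nat.cast_zero,
        zero_mul, zero_add]
      simp only [mul_assoc]
      rw [expA_mul' A]
      rw [show I * h + -(I * (h / 2)) = I * (h / 2) by ring]
  | succ L ih =>
      rw [List.ofFn_succ']
      simp only [List.concat_eq_append, List.reverse_append, List.reverse_cons,
        List.reverse_nil, List.nil_append, List.prod_cons, List.prod_append,
        List.prod_nil, Fin.coe_castSucc, Fin.val_last, mul_one, one_mul]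
      rw [ih, pow_succ']
      simp only [mul_assoc]
      rw [expA_mul' A (-(I * ((↑(L+1) : ℂ) * h + h / 2)))]
      rw [show -(I * ((↑(L+1) : ℂ) * h + h / 2)) + I * (((L : ℂ) + 1) * h)
            = -(I * (h / 2)) by push_cast; ring]
      rw [expA_mul' A (-(I * (h / 2))) (-(I * (h / 2)))]
      rw [show -(I * (h / 2)) + -(I * (h / 2)) = -(I * h) by ring]
      rw [expA_mul' A (I * ((((↑(L+1) : ℂ)) + 1) * h)) (-(I * (h / 2)))]
      rw [show I * ((((↑(L+1) : ℂ)) + 1) * h) + -(I * (h / 2))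
            = I * ((↑(L+1) : ℂ) * h + h / 2) by push_cast; ring]
end Aux

/-- Midpoint-quadrature qHOP in the interaction picture recovers the second-order
Trotter formula. -/
theorem stmt17 (n : ℕ) (A B : Matrix (Fin n) (Fin n) ℂ)
    (hA : A.IsHermitian) (hB : B.IsHermitian)
    (h T : ℝ) (hh : 0 < h) (L : ℕ) (hL : 1 ≤ L) (hT : T = L * h)
    (HI : ℝ → Matrix (Fin n) (Fin n) ℂ)
    (hHI : ∀ t, HI t = NormedSpace.exp ((I * (t : ℂ)) • A) * B * NormedSpace.exp ((-(I : ℂ) * (t : ℂ)) • A)) :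
    NormedSpace.exp ((-(I : ℂ) * ((h / 2 : ℝ) : ℂ)) • A) *
        (NormedSpace.exp ((-(I : ℂ) * (h : ℂ)) • B) * NormedSpace.exp ((-(I : ℂ) * (h : ℂ)) • A)) ^ (L - 1) *
        NormedSpace.exp ((-(I : ℂ) * (h : ℂ)) • B) *
        NormedSpace.exp ((-(I : ℂ) * ((h / 2 : ℝ) : ℂ)) • A) =
      NormedSpace.exp ((-(I : ℂ) * (T : ℂ)) • A) *
        ((List.ofFn fun j : Fin L =>
            NormedSpace.exp ((-(I : ℂ) * (h : ℂ)) • HI ((j : ℝ) * h + h / 2))).reverse).prod := by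
  obtain ⟨K, rfl⟩ : ∃ K, L = K + 1 := ⟨L - 1, (Nat.succ_pred_eq_of_pos hL).symm⟩
  have hlist : (List.ofFn fun j : Fin (K + 1) =>
        NormedSpace.exp ((-(I : ℂ) * (h : ℂ)) • HI ((j : ℝ) * h + h / 2)))
      = List.ofFn fun j : Fin (K + 1) =>
          NormedSpace.exp ((I * ((j.val : ℂ) * (h : ℂ) + (h : ℂ) / 2)) • A) *
            NormedSpace.exp ((-(I * (h : ℂ))) • B) *
            NormedSpace.exp ((-(I * ((j.val : ℂ) * (h : ℂ) + (h : ℂ) / 2))) • A) := by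
    refine congrArg List.ofFn (funext fun j => ?_)
    rw [hHI]
    have ht : ((((j : ℝ) * h + h / 2 : ℝ)) : ℂ)
        = (j.val : ℂ) * (h : ℂ) + (h : ℂ) / 2 := by push_cast; ring
    rw [ht, show (-(I : ℂ) * ((j.val : ℂ) * (h : ℂ) + (h : ℂ) / 2))
        = -((I : ℂ) * ((j.val : ℂ) * (h : ℂ) + (h : ℂ) / 2)) from neg_mul _ _,
      show (-(I : ℂ) * (h : ℂ)) = -((I : ℂ) * (h : ℂ)) from neg_mul _ _]
    exact exp_conj_lemma A B _ _
  rw [hlist, key_ind]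
  rw [show (-(I : ℂ) * ((h / 2 : ℝ) : ℂ)) = -((I : ℂ) * ((h : ℂ) / 2)) by push_cast; ring,
    show (-(I : ℂ) * ((h : ℝ) : ℂ)) = -((I : ℂ) * ((h : ℝ) : ℂ)) from neg_mul _ _,
    show (-(I : ℂ) * ((T : ℝ) : ℂ)) = -((I : ℂ) * ((T : ℝ) : ℂ)) from neg_mul _ _]
  rw [← mul_assoc (NormedSpace.exp _) (NormedSpace.exp _), expA_mul,
    show -((I : ℂ) * ((T : ℝ) : ℂ)) + I * (((K : ℂ) + 1) * (h : ℂ)) = 0 by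
      subst hT; push_cast; ring,
    zero_smul, NormedSpace.exp_zero, one_mul, Nat.add_sub_cancel]
end
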